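/- Let k be a field and let f ∈ k[x₀,x₁,x₂,x₃] be a homogeneous polynomial of degree 3. If f(v) ≠ 0 for every nonzero v ∈ k⁴, then for every field extension K/k with [K:k] = 2 and every nonzero v ∈ K⁴ one has f(v) ≠ 0. (A cubic surface over k with no k-rational point has no points over any quadratic extension of k.) -/

import Mathlib

open MvPolynomial

section aux
open Polynomial
variable {R : Type*} [CommSemiring R] {ι : Type*}

theorem my_coeff_prod (s : Finset ι) (p : ι → R[X]) (d : ι → ℕ)
    (h : ∀ i ∈ s, (p i).natDegree ≤ d i) :
    (∏ i ∈ s, p i).coeff (∑ i ∈ s, d i) = ∏ i ∈ s, (p i).coeff (d i) := by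
  classical
  induction s using Finset.cons_induction with
  | empty => simp
  | cons i s his ih =>
    rw [Finset.prod_cons, Finset.sum_cons,
      Polynomial.coeff_mul_add_eq_of_natDegree_le (h i (Finset.mem_cons_self _ _))
        (le_trans (Polynomial.natDegree_prod_le _ _)
          (Finset.sum_le_sum fun j hj => h j (Finset.mem_cons_of_mem hj))),
      ih fun j hj => h j (Finset.mem_cons_of_mem hj), Finset.prod_cons]

theorem my_natDegree_linear_le (a b : R) : ((Polynomial.C a + Polynomial.C b * Polynomial.X : R[X])).natDegree ≤ 1 := by
  compute_degree

theorem my_natDegree_linear_pow_le (a b : R) (n : ℕ) :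
    (((Polynomial.C a + Polynomial.C b * Polynomial.X : R[X])) ^ n).natDegree ≤ n := by
  refine le_trans (Polynomial.natDegree_pow_le) ?_
  calc n * (Polynomial.C a + Polynomial.C b * Polynomial.X : R[X]).natDegree ≤ n * 1 :=
        Nat.mul_le_mul_left n (my_natDegree_linear_le a b)
    _ = n := mul_one n

theorem my_coeff_linear_pow (a b : R) (n : ℕ) :
    (((Polynomial.C a + Polynomial.C b * Polynomial.X : R[X])) ^ n).coeff n = b ^ n := by
  induction n with
  | zero => simp
  | succ n ih =>
    rw [pow_succ,
      Polynomial.coeff_mul_add_eq_of_natDegree_le (my_natDegree_linear_pow_le a b n)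
        (my_natDegree_linear_le a b), ih, pow_succ]
    congr 1
    simp

theorem my_support_sum {σ : Type*} {F : MvPolynomial σ R} {n : ℕ}
    (hF : F.IsHomogeneous n) {d : σ →₀ ℕ} (hd : d ∈ F.support) :
    ∑ i ∈ d.support, d i = n := by
  have := hF (MvPolynomial.mem_support_iff.mp hd)
  simpa [Finsupp.weight_apply, Finsupp.sum] using this

theorem my_coeff_subst {σ : Type*} (F : MvPolynomial σ R) {n : ℕ}
    (hF : F.IsHomogeneous n) (a b : σ → R) :
    (MvPolynomial.eval₂ Polynomial.C (fun i => (Polynomial.C (a i) + Polynomial.C (b i) * Polynomial.X : R[X])) F).coeff n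
      = MvPolynomial.eval b F := by
  rw [MvPolynomial.eval₂_eq, MvPolynomial.eval_eq, Polynomial.finset_sum_coeff]
  refine Finset.sum_congr rfl fun d hd => ?_
  rw [Polynomial.coeff_C_mul, ← my_support_sum hF hd,
    my_coeff_prod _ _ _ fun i _ => my_natDegree_linear_pow_le (a i) (b i) (d i)]
  refine congrArg _ (Finset.prod_congr rfl fun i _ => my_coeff_linear_pow _ _ _)

theorem my_natDegree_subst {σ : Type*} (F : MvPolynomial σ R) {n : ℕ}
    (hF : F.IsHomogeneous n) (a b : σ → R) :
    (MvPolynomial.eval₂ Polynomial.C (fun i => (Polynomial.C (a i) + Polynomial.C (b i) * Polynomial.X : R[X])) F).natDegree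
      ≤ n := by
  rw [MvPolynomial.eval₂_eq]
  refine Polynomial.natDegree_sum_le_of_forall_le _ _ fun d hd => ?_
  refine le_trans (Polynomial.natDegree_mul_le) ?_
  simp only [Polynomial.natDegree_C, zero_add]
  refine le_trans (Polynomial.natDegree_prod_le _ _) ?_
  rw [← my_support_sum hF hd]
  exact Finset.sum_le_sum fun i _ => my_natDegree_linear_pow_le (a i) (b i) (d i)

theorem my_eval_mul {σ : Type*} {F : MvPolynomial σ R} {n : ℕ}
    (hF : F.IsHomogeneous n) (c : R) (w : σ → R) :
    MvPolynomial.eval (fun i => c * w i) F = c ^ n * MvPolynomial.eval w F := by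
  rw [MvPolynomial.eval_eq, MvPolynomial.eval_eq, Finset.mul_sum]
  refine Finset.sum_congr rfl fun d hd => ?_
  rw [← my_support_sum hF hd]
  simp only [mul_pow, Finset.prod_mul_distrib, Finset.prod_pow_eq_pow_sum]
  ring

end aux
theorem no_point_over_quadratic_extension_of_cubic
    (k : Type) [Field k]
    (f : MvPolynomial (Fin 4) k) (hdeg : f.IsHomogeneous 3)
    (hnopoint : ∀ v : Fin 4 → k, v ≠ 0 → eval v f ≠ 0) :
    ∀ (K : Type) [Field K] [Algebra k K], Module.finrank k K = 2 →
      ∀ v : Fin 4 → K, v ≠ 0 → eval v (MvPolynomial.map (algebraMap k K) f) ≠ 0 := by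
  intro K _ _ hrank v hv heq
  have hfin : FiniteDimensional k K := FiniteDimensional.of_finrank_pos (by omega)
  set φ := algebraMap k K with hφ
  have hφinj : Function.Injective φ := (algebraMap k K).injective
  rw [MvPolynomial.eval_map] at heq
  have hφeval : ∀ w : Fin 4 → k, φ (MvPolynomial.eval w f)
      = MvPolynomial.eval₂ φ (fun i => φ (w i)) f := by
    intro w
    rw [← MvPolynomial.eval₂_id (g := w) f, MvPolynomial.eval₂_comp_left φ]
    rfl
  -- get α outside the range of φ
  obtain ⟨α, hα⟩ : ∃ α : K, α ∉ Set.range φ := by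
    by_contra h
    push_neg at h
    have hsurj : Function.Surjective (Algebra.linearMap k K) := fun x => h x
    have h1 : LinearMap.range (Algebra.linearMap k K) = ⊤ := LinearMap.range_eq_top.mpr hsurj
    have h2 := LinearMap.finrank_range_le (Algebra.linearMap k K)
    rw [h1, finrank_top, hrank, Module.finrank_self] at h2
    omega
  have hα' : α ∉ (algebraMap k K).range := by
    intro h
    obtain ⟨c, hc⟩ := RingHom.mem_range.mp h
    exact hα ⟨c, hc⟩
  -- basis (1, α)
  have li : LinearIndependent k ![1, α] := by
    rw [linearIndependent_fin2]
    constructor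
    · simpa using fun h : α = 0 => hα ⟨0, by simp [h.symm]⟩
    · intro c hc
      simp only [Matrix.cons_val_one, Matrix.head_cons, Matrix.cons_val_zero] at hc
      have hc0 : c ≠ 0 := by rintro rfl; simp at hc
      rw [Algebra.smul_def] at hc
      exact hα ⟨c⁻¹, by rw [map_inv₀, eq_inv_of_mul_eq_one_left hc, inv_inv]⟩
  let B := basisOfLinearIndependentOfCardEqFinrank li (by simp [hrank])
  have hB : ⇑B = ![1, α] := coe_basisOfLinearIndependentOfCardEqFinrank li _
  set a : Fin 4 → k := fun i => B.repr (v i) 0 with ha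
  set b : Fin 4 → k := fun i => B.repr (v i) 1 with hbdef
  have hvi : ∀ i, v i = φ (a i) + φ (b i) * α := by
    intro i
    have := B.sum_repr (v i)
    rw [Fin.sum_univ_two, hB] at this
    simp only [Matrix.cons_val_zero, Matrix.cons_val_one, Matrix.head_cons] at this
    rw [Algebra.smul_def, Algebra.smul_def, mul_one] at this
    exact this.symm
  by_cases hb : b = 0
  · -- v lands in k
    have hva : ∀ i, v i = φ (a i) := by
      intro i; rw [hvi i, hb]; simp
    have ha0 : a ≠ 0 := by
      intro ha0'
      exact hv (funext fun i => by
        rw [hva i, show a i = 0 from congrFun ha0' i, map_zero]; rfl)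
    have hveq : v = fun i => φ (a i) := funext hva
    rw [hveq, ← hφeval] at heq
    exact hnopoint a ha0 (hφinj (by rw [map_zero]; exact heq))
  · have hfb : MvPolynomial.eval b f ≠ 0 := hnopoint b hb
    set g : Polynomial k :=
      MvPolynomial.eval₂ Polynomial.C
        (fun i => (Polynomial.C (a i) + Polynomial.C (b i) * Polynomial.X : Polynomial k)) f
      with hg
    have hg3 : g.coeff 3 = MvPolynomial.eval b f := my_coeff_subst f hdeg a b
    have hgdeg : g.natDegree ≤ 3 := my_natDegree_subst f hdeg a b
    have hgne : g ≠ 0 := fun h => hfb (by rw [← hg3, h]; simp)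
    have hgnat : g.natDegree = 3 :=
      le_antisymm hgdeg (Polynomial.le_natDegree_of_ne_zero (hg3 ▸ hfb))
    -- g(α) = 0
    have hgα : Polynomial.aeval α g = 0 := by
      have comp := MvPolynomial.eval₂_comp_left (Polynomial.aeval α).toRingHom
        Polynomial.C
        (fun i => (Polynomial.C (a i) + Polynomial.C (b i) * Polynomial.X : Polynomial k)) f
      have h1 : (Polynomial.aeval α).toRingHom.comp Polynomial.C = φ := by
        ext c; simp [hφ]
      have h2 : (⇑(Polynomial.aeval α).toRingHom ∘ fun i =>
          (Polynomial.C (a i) + Polynomial.C (b i) * Polynomial.X : Polynomial k)) = v := by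
        funext i
        show Polynomial.aeval α (Polynomial.C (a i) + Polynomial.C (b i) * Polynomial.X) = v i
        rw [map_add, map_mul, Polynomial.aeval_C, Polynomial.aeval_C, Polynomial.aeval_X,
          hvi i]
      rw [h1, h2] at comp
      calc Polynomial.aeval α g = MvPolynomial.eval₂ φ v f := comp
        _ = 0 := heq
    have hint : IsIntegral k α := IsIntegral.of_finite k α
    have hpne : minpoly k α ≠ 0 := minpoly.ne_zero hint
    have hpdeg : (minpoly k α).natDegree = 2 := by
      refine le_antisymm ?_ ((minpoly.two_le_natDegree_iff hint).mpr hα')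
      calc (minpoly k α).natDegree ≤ Module.finrank k K := minpoly.natDegree_le α
        _ = 2 := hrank
    obtain ⟨q, hq⟩ : minpoly k α ∣ g := minpoly.dvd k α hgα
    have hqne : q ≠ 0 := by rintro rfl; rw [mul_zero] at hq; exact hgne hq
    have hqdeg : q.natDegree = 1 := by
      have := Polynomial.natDegree_mul hpne hqne
      rw [← hq, hgnat, hpdeg] at this
      omega
    have hq1 : q.coeff 1 ≠ 0 := by
      have h1 : q.coeff 1 = q.leadingCoeff := by rw [Polynomial.leadingCoeff, hqdeg]
      rw [h1]
      exact Polynomial.leadingCoeff_ne_zero.mpr hqne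
    set lam : k := -(q.coeff 0) / q.coeff 1 with hlam
    have hqlam : q.eval lam = 0 := by
      conv_lhs => rw [Polynomial.eq_X_add_C_of_natDegree_le_one (le_of_eq hqdeg)]
      simp only [Polynomial.eval_add, Polynomial.eval_mul, Polynomial.eval_C, Polynomial.eval_X]
      rw [hlam]
      field_simp
      ring
    have hglam : g.eval lam = 0 := by
      rw [hq, Polynomial.eval_mul, hqlam, mul_zero]
    set w : Fin 4 → k := fun i => a i + b i * lam with hw
    have hevw : MvPolynomial.eval w f = g.eval lam := by
      have comp := MvPolynomial.eval₂_comp_left (Polynomial.evalRingHom lam)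
        Polynomial.C
        (fun i => (Polynomial.C (a i) + Polynomial.C (b i) * Polynomial.X : Polynomial k)) f
      have h1 : (Polynomial.evalRingHom lam).comp Polynomial.C = RingHom.id k := by
        ext c; simp
      have h2 : (⇑(Polynomial.evalRingHom lam) ∘ fun i =>
          (Polynomial.C (a i) + Polynomial.C (b i) * Polynomial.X : Polynomial k)) = w := by
        funext i
        show Polynomial.eval lam (Polynomial.C (a i) + Polynomial.C (b i) * Polynomial.X) = w i
        simp [hw]
      rw [h1, h2, MvPolynomial.eval₂_id] at comp
      exact comp.symm
    have hw0 : w = 0 := by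
      by_contra hw0'
      exact hnopoint w hw0' (hevw.trans hglam)
    have hvi2 : ∀ i, v i = (α - φ lam) * φ (b i) := by
      intro i
      have hai : a i + b i * lam = 0 := by
        have := congrFun hw0 i
        simpa [hw] using this
      rw [hvi i, eq_neg_of_add_eq_zero_left hai, map_neg, map_mul]
      ring
    have hmap : (MvPolynomial.map φ f).IsHomogeneous 3 := hdeg.map φ
    have hvfun : v = fun i => (α - φ lam) * φ (b i) := funext hvi2
    have heq2 : MvPolynomial.eval (fun i => (α - φ lam) * φ (b i)) (MvPolynomial.map φ f)
        = 0 := by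
      have h0 : MvPolynomial.eval v (MvPolynomial.map φ f) = 0 := by
        rw [MvPolynomial.eval_map]; exact heq
      rwa [hvfun] at h0
    rw [my_eval_mul hmap (α - φ lam) (fun i => φ (b i))] at heq2
    have hαlam : α - φ lam ≠ 0 := fun h => hα ⟨lam, (sub_eq_zero.mp h).symm⟩
    have hb' : MvPolynomial.eval (fun i => φ (b i)) (MvPolynomial.map φ f) ≠ 0 := by
      rw [MvPolynomial.eval_map, ← hφeval]
      exact fun h => hfb (hφinj (by rw [map_zero]; exact h))
    exact (mul_ne_zero (pow_ne_zero 3 hαlam) hb') heq2
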